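/- Let ι be a nonempty directed index set with its associated nontrivial filter l, let r : ι → (0,∞) satisfy r_λ → +∞ along l, and for each λ let μ_λ and μ̂_λ be Borel probability measures on ℝ satisfying the detailed fluctuation relation μ̂_λ(ds) = e^{−s} μ_λ(ds) (μ̂_λ has density s ↦ e^{−s} with respect to μ_λ). Let J ⊆ ℝ be an interval and let I, Î : ℝ → [0,+∞] be lower semicontinuous functions such that for every Borel set S ⊆ J: −inf_{s∈int S} I(s) ≤ liminf_λ r_λ^{−1} log μ_λ(r_λ·S) and limsup_λ r_λ^{−1} log μ_λ(r_λ·S) ≤ −inf_{s∈cl S} I(s), and the same two bounds hold for μ̂_λ with Î in place of I. Then Î(s) = I(s) + s for every s in the interior of J. -/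

import Mathlib

open MeasureTheory Filter
open scoped ENNReal NNReal Pointwise

/-- **Asymptotic fluctuation relation.**
Suppose the probability measures `μ_λ`, `μ̂_λ` on `ℝ` satisfy the detailed (transient)
fluctuation relation `μ̂_λ(ds) = e^{−s} μ_λ(ds)`, and that along the nontrivial filter `l`
of the directed index set, with scale `r_λ → +∞`, both families satisfy local large
deviation bounds on the interval `J` with lower semicontinuous rate functions `I`, `Î`
(taking values in `[0,+∞]`): for every Borel `S ⊆ J`,
`−inf_{int S} I ≤ liminf r⁻¹ log μ_λ(r_λ·S) ≤ limsup r⁻¹ log μ_λ(r_λ·S) ≤ −inf_{cl S} I`,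
and likewise for `μ̂_λ`, `Î`.  Then `Î(s) = I(s) + s` for every `s` in the interior of `J`
(the identity read in `[−∞,+∞]`). -/
lemma myaux_distrib (t c : ℝ) (ht : 0 ≤ t) (x : EReal) :
    (t : EReal) * ((c : EReal) + x) = ((t * c : ℝ) : EReal) + (t : EReal) * x := by
  rcases eq_or_lt_of_le ht with h | h
  · simp [← h]
  · have ht' : (0 : EReal) < (t : EReal) := EReal.coe_pos.2 h
    induction x with
    | bot => rw [EReal.add_bot, EReal.mul_bot_of_pos ht', EReal.add_bot]
    | coe y => norm_cast; ring
    | top => rw [EReal.coe_add_top, EReal.mul_top_of_pos ht', EReal.coe_add_top]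

lemma myaux_lsc {f : ℝ → ℝ≥0∞} (hf : LowerSemicontinuous f) {x y : ℝ}
    (h : (y : EReal) < (f x : EReal)) :
    ∃ δ > 0, ∀ t : ℝ, dist t x ≤ δ → (y : EReal) ≤ (f t : EReal) := by
  rcases le_or_gt y 0 with hy | hy
  · exact ⟨1, one_pos, fun t _ =>
      le_trans (EReal.coe_nonpos.2 hy) (EReal.coe_ennreal_nonneg _)⟩
  · have hco : ((ENNReal.ofReal y : ℝ≥0∞) : EReal) = (y : EReal) := by
      rw [EReal.coe_ennreal_ofReal, max_eq_left hy.le]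
    have h' : ENNReal.ofReal y < f x := by
      rw [← EReal.coe_ennreal_lt_coe_ennreal_iff, hco]; exact h
    have := hf x _ h'
    rw [Metric.eventually_nhds_iff] at this
    obtain ⟨δ, hδ, hδ'⟩ := this
    refine ⟨δ / 2, by positivity, fun t ht => ?_⟩
    have h2 := hδ' (y := t) (by rw [Real.dist_eq] at ht ⊢; linarith)
    rw [← hco]
    exact EReal.coe_ennreal_le_coe_ennreal_iff.2 h2.le

theorem asymptotic_fluctuation_relation
    {ι : Type*} (l : Filter ι) [l.NeBot]
    (r : ι → ℝ) (hrpos : ∀ i, 0 < r i) (hr : Tendsto r l atTop)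
    (μ μhat : ι → Measure ℝ)
    (hμprob : ∀ i, IsProbabilityMeasure (μ i))
    (hμhatprob : ∀ i, IsProbabilityMeasure (μhat i))
    (hFR : ∀ i, μhat i = (μ i).withDensity (fun s => ENNReal.ofReal (Real.exp (-s))))
    (J : Set ℝ) (hJ : J.OrdConnected)
    (I Ihat : ℝ → ℝ≥0∞)
    (hIlsc : LowerSemicontinuous I) (hIhatlsc : LowerSemicontinuous Ihat)
    (hLDP : ∀ S : Set ℝ, S ⊆ J → MeasurableSet S →
      (-(⨅ s ∈ interior S, (I s : EReal))
          ≤ liminf (fun i => ((r i)⁻¹ : EReal) * ENNReal.log (μ i (r i • S))) l)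
      ∧ (limsup (fun i => ((r i)⁻¹ : EReal) * ENNReal.log (μ i (r i • S))) l
          ≤ -(⨅ s ∈ closure S, (I s : EReal))))
    (hLDPhat : ∀ S : Set ℝ, S ⊆ J → MeasurableSet S →
      (-(⨅ s ∈ interior S, (Ihat s : EReal))
          ≤ liminf (fun i => ((r i)⁻¹ : EReal) * ENNReal.log (μhat i (r i • S))) l)
      ∧ (limsup (fun i => ((r i)⁻¹ : EReal) * ENNReal.log (μhat i (r i • S))) l
          ≤ -(⨅ s ∈ closure S, (Ihat s : EReal)))) :
    ∀ s ∈ interior J, (Ihat s : EReal) = (I s : EReal) + (s : EReal) := by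
  
  intro s₀ hs₀
  -- a closed ball around s₀ inside J
  obtain ⟨ε₀, hε₀pos, hball⟩ :
      ∃ ε₀ > 0, Metric.closedBall s₀ ε₀ ⊆ J := by
    have hJn : J ∈ nhds s₀ := mem_interior_iff_mem_nhds.1 hs₀
    exact (Metric.nhds_basis_closedBall.mem_iff).1 hJn
  -- The key ε-inequalities
  have key : ∀ ε : ℝ, 0 < ε → ε ≤ ε₀ →
      (((s₀ - ε : ℝ) : EReal) + ⨅ t ∈ Set.Icc (s₀ - ε) (s₀ + ε), (I t : EReal)
          ≤ (Ihat s₀ : EReal))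
      ∧ ((⨅ t ∈ Set.Icc (s₀ - ε) (s₀ + ε), (Ihat t : EReal))
          ≤ ((s₀ + ε : ℝ) : EReal) + (I s₀ : EReal)) := by
    intro ε hε hεε₀
    set S : Set ℝ := Set.Ioo (s₀ - ε) (s₀ + ε) with hS
    have hab : s₀ - ε < s₀ + ε := by linarith
    have hIccJ : Set.Icc (s₀ - ε) (s₀ + ε) ⊆ J := by
      intro t ht
      apply hball
      rw [Real.closedBall_eq_Icc]
      exact ⟨by linarith [ht.1], by linarith [ht.2]⟩
    have hSJ : S ⊆ J := Set.Ioo_subset_Icc_self.trans hIccJ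
    have hint : interior S = S := isOpen_Ioo.interior_eq
    have hcl : closure S = Set.Icc (s₀ - ε) (s₀ + ε) := closure_Ioo hab.ne
    have hsmul : ∀ i, r i • S = Set.Ioo (r i * (s₀ - ε)) (r i * (s₀ + ε)) := by
      intro i
      simpa [smul_eq_mul] using LinearOrderedField.smul_Ioo (hrpos i) (a := s₀ - ε) (b := s₀ + ε)
    have hmeas : ∀ i, MeasurableSet (r i • S) := fun i => by
      rw [hsmul i]; exact measurableSet_Ioo
    set g : ι → EReal := fun i => ((r i)⁻¹ : EReal) * ENNReal.log (μ i (r i • S)) with hg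
    set ghat : ι → EReal := fun i => ((r i)⁻¹ : EReal) * ENNReal.log (μhat i (r i • S)) with hghat
    -- measure comparison
    have hup : ∀ i, μhat i (r i • S)
        ≤ ENNReal.ofReal (Real.exp (-(r i * (s₀ - ε)))) * μ i (r i • S) := by
      intro i
      rw [hFR i, withDensity_apply _ (hmeas i)]
      calc ∫⁻ u in r i • S, ENNReal.ofReal (Real.exp (-u)) ∂(μ i)
          ≤ ∫⁻ _ in r i • S, ENNReal.ofReal (Real.exp (-(r i * (s₀ - ε)))) ∂(μ i) := by
            apply setLIntegral_mono measurable_const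
            intro u hu
            rw [hsmul i] at hu
            exact ENNReal.ofReal_le_ofReal (Real.exp_le_exp.2 (by linarith [hu.1]))
        _ = ENNReal.ofReal (Real.exp (-(r i * (s₀ - ε)))) * μ i (r i • S) :=
            setLIntegral_const _ _
    have hdown : ∀ i, ENNReal.ofReal (Real.exp (-(r i * (s₀ + ε)))) * μ i (r i • S)
        ≤ μhat i (r i • S) := by
      intro i
      rw [hFR i, withDensity_apply _ (hmeas i)]
      calc ENNReal.ofReal (Real.exp (-(r i * (s₀ + ε)))) * μ i (r i • S)
          = ∫⁻ _ in r i • S, ENNReal.ofReal (Real.exp (-(r i * (s₀ + ε)))) ∂(μ i) :=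
            (setLIntegral_const _ _).symm
        _ ≤ ∫⁻ u in r i • S, ENNReal.ofReal (Real.exp (-u)) ∂(μ i) := by
            apply setLIntegral_mono
            · exact (Real.continuous_exp.comp continuous_neg).measurable.ennreal_ofReal
            · intro u hu
              rw [hsmul i] at hu
              exact ENNReal.ofReal_le_ofReal (Real.exp_le_exp.2 (by linarith [hu.2]))
    -- log of ofReal exp mult
    have hlog : ∀ (t : ℝ) (m : ℝ≥0∞),
        ENNReal.log (ENNReal.ofReal (Real.exp t) * m) = (t : EReal) + ENNReal.log m := by
      intro t m
      rw [ENNReal.log_mul_add, ENNReal.log_ofReal_of_pos (Real.exp_pos t), Real.log_exp]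
    -- pointwise bounds on the rescaled logs
    have hrinv : ∀ i, (0 : EReal) ≤ ((r i)⁻¹ : EReal) := by
      intro i
      rw [← EReal.coe_inv]
      exact EReal.coe_nonneg.2 (inv_nonneg.2 (hrpos i).le)
    have hdistrib : ∀ (i : ι) (c : ℝ) (x : EReal),
        ((r i)⁻¹ : EReal) * ((-(r i * c) : ℝ) + x)
          = ((-c : ℝ) : EReal) + ((r i)⁻¹ : EReal) * x := by
      intro i c x
      have h0 : r i ≠ 0 := (hrpos i).ne'
      rw [← EReal.coe_inv, myaux_distrib _ _ (inv_nonneg.2 (hrpos i).le)]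
      congr 2
      field_simp
    have hup2 : ∀ i, ghat i ≤ ((-(s₀ - ε) : ℝ) : EReal) + g i := by
      intro i
      have h1 : ENNReal.log (μhat i (r i • S))
          ≤ ((-(r i * (s₀ - ε)) : ℝ) : EReal) + ENNReal.log (μ i (r i • S)) := by
        rw [← hlog]
        exact ENNReal.log_monotone (hup i)
      have h2 := mul_le_mul_of_nonneg_left h1 (hrinv i)
      rw [hdistrib i (s₀ - ε)] at h2
      exact h2
    have hdown2 : ∀ i, ((-(s₀ + ε) : ℝ) : EReal) + g i ≤ ghat i := by
      intro i
      have h1 : ((-(r i * (s₀ + ε)) : ℝ) : EReal) + ENNReal.log (μ i (r i • S))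
          ≤ ENNReal.log (μhat i (r i • S)) := by
        rw [← hlog]
        exact ENNReal.log_monotone (hdown i)
      have h2 := mul_le_mul_of_nonneg_left h1 (hrinv i)
      rw [hdistrib i (s₀ + ε)] at h2
      exact h2
    -- limsup/liminf comparisons
    have hlimsup : limsup ghat l ≤ ((-(s₀ - ε) : ℝ) : EReal) + limsup g l := by
      calc limsup ghat l ≤ limsup ((fun _ => ((-(s₀ - ε) : ℝ) : EReal)) + g) l :=
            limsup_le_limsup (Eventually.of_forall hup2)
        _ ≤ limsup (fun _ => ((-(s₀ - ε) : ℝ) : EReal)) l + limsup g l := by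
            apply EReal.limsup_add_le
            · left; rw [limsup_const]; exact EReal.coe_ne_bot _
            · left; rw [limsup_const]; exact EReal.coe_ne_top _
        _ = ((-(s₀ - ε) : ℝ) : EReal) + limsup g l := by rw [limsup_const]
    have hliminf : ((-(s₀ + ε) : ℝ) : EReal) + liminf g l ≤ liminf ghat l := by
      calc ((-(s₀ + ε) : ℝ) : EReal) + liminf g l
          = liminf (fun _ => ((-(s₀ + ε) : ℝ) : EReal)) l + liminf g l := by rw [liminf_const]
        _ ≤ liminf ((fun _ => ((-(s₀ + ε) : ℝ) : EReal)) + g) l := EReal.le_liminf_add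
        _ ≤ liminf ghat l := liminf_le_liminf (Eventually.of_forall hdown2)
    -- LDP bounds
    have hLDPS := hLDP S hSJ measurableSet_Ioo
    have hLDPhatS := hLDPhat S hSJ measurableSet_Ioo
    constructor
    · -- lower bound direction
      have chainA : -(⨅ t ∈ S, (Ihat t : EReal))
          ≤ ((-(s₀ - ε) : ℝ) : EReal) + -(⨅ t ∈ Set.Icc (s₀ - ε) (s₀ + ε), (I t : EReal)) := by
        calc -(⨅ t ∈ S, (Ihat t : EReal)) = -(⨅ t ∈ interior S, (Ihat t : EReal)) := by rw [hint]
          _ ≤ liminf ghat l := hLDPhatS.1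
          _ ≤ limsup ghat l := liminf_le_limsup
          _ ≤ ((-(s₀ - ε) : ℝ) : EReal) + limsup g l := hlimsup
          _ ≤ ((-(s₀ - ε) : ℝ) : EReal) + -(⨅ t ∈ closure S, (I t : EReal)) :=
              add_le_add le_rfl hLDPS.2
          _ = ((-(s₀ - ε) : ℝ) : EReal) + -(⨅ t ∈ Set.Icc (s₀ - ε) (s₀ + ε), (I t : EReal)) := by
              rw [hcl]
      have h5 : ((s₀ - ε : ℝ) : EReal) + (⨅ t ∈ Set.Icc (s₀ - ε) (s₀ + ε), (I t : EReal))
          ≤ ⨅ t ∈ S, (Ihat t : EReal) := by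
        rw [EReal.neg_le] at chainA
        have hrw : -(((-(s₀ - ε) : ℝ) : EReal)
              + -(⨅ t ∈ Set.Icc (s₀ - ε) (s₀ + ε), (I t : EReal)))
            = ((s₀ - ε : ℝ) : EReal) + (⨅ t ∈ Set.Icc (s₀ - ε) (s₀ + ε), (I t : EReal)) := by
          rw [EReal.neg_add (Or.inl (EReal.coe_ne_bot _)) (Or.inl (EReal.coe_ne_top _))]
          rw [sub_eq_add_neg, neg_neg, ← EReal.coe_neg, neg_neg]
        rwa [hrw] at chainA
      refine h5.trans ?_
      exact iInf₂_le s₀ ⟨by linarith, by linarith⟩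
    · -- upper bound direction
      have chainB : ((-(s₀ + ε) : ℝ) : EReal) + -(⨅ t ∈ S, (I t : EReal))
          ≤ -(⨅ t ∈ Set.Icc (s₀ - ε) (s₀ + ε), (Ihat t : EReal)) := by
        calc ((-(s₀ + ε) : ℝ) : EReal) + -(⨅ t ∈ S, (I t : EReal))
            = ((-(s₀ + ε) : ℝ) : EReal) + -(⨅ t ∈ interior S, (I t : EReal)) := by rw [hint]
          _ ≤ ((-(s₀ + ε) : ℝ) : EReal) + liminf g l := add_le_add le_rfl hLDPS.1
          _ ≤ liminf ghat l := hliminf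
          _ ≤ limsup ghat l := liminf_le_limsup
          _ ≤ -(⨅ t ∈ closure S, (Ihat t : EReal)) := hLDPhatS.2
          _ = -(⨅ t ∈ Set.Icc (s₀ - ε) (s₀ + ε), (Ihat t : EReal)) := by rw [hcl]
      have h6 : (⨅ t ∈ Set.Icc (s₀ - ε) (s₀ + ε), (Ihat t : EReal))
          ≤ ((s₀ + ε : ℝ) : EReal) + (⨅ t ∈ S, (I t : EReal)) := by
        have h7 := EReal.le_neg_of_le_neg chainB
        have hrw : -(((-(s₀ + ε) : ℝ) : EReal) + -(⨅ t ∈ S, (I t : EReal)))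
            = ((s₀ + ε : ℝ) : EReal) + (⨅ t ∈ S, (I t : EReal)) := by
          rw [EReal.neg_add (Or.inl (EReal.coe_ne_bot _)) (Or.inl (EReal.coe_ne_top _))]
          rw [sub_eq_add_neg, neg_neg, ← EReal.coe_neg, neg_neg]
        rwa [hrw] at h7
      refine h6.trans (add_le_add le_rfl ?_)
      exact iInf₂_le s₀ ⟨by linarith, by linarith⟩
  -- Direction 1 : I s₀ + s₀ ≤ Ihat s₀
  have dir1 : (I s₀ : EReal) + (s₀ : EReal) ≤ (Ihat s₀ : EReal) := by
    refine EReal.add_le_of_forall_lt fun a' ha' b' hb' => ?_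
    obtain ⟨y, hay, hyI⟩ := EReal.exists_between_coe_real ha'
    obtain ⟨c, hbc, hcs⟩ := EReal.exists_between_coe_real hb'
    have hcs' : c < s₀ := by exact_mod_cast hcs
    obtain ⟨δ, hδpos, hδ⟩ := myaux_lsc hIlsc hyI
    set ε := min (min δ ε₀) (s₀ - c) with hε
    have hεpos : 0 < ε := lt_min (lt_min hδpos hε₀pos) (by linarith)
    have hεδ : ε ≤ δ := le_trans (min_le_left _ _) (min_le_left _ _)
    have hεε₀ : ε ≤ ε₀ := le_trans (min_le_left _ _) (min_le_right _ _)
    have hεc : ε ≤ s₀ - c := min_le_right _ _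
    have hkey := (key ε hεpos hεε₀).1
    have hinf : (y : EReal) ≤ ⨅ t ∈ Set.Icc (s₀ - ε) (s₀ + ε), (I t : EReal) := by
      refine le_iInf₂ fun t ht => hδ t ?_
      rw [Real.dist_eq, abs_sub_le_iff]
      exact ⟨by linarith [ht.2], by linarith [ht.1]⟩
    calc a' + b' ≤ (y : EReal) + (c : EReal) := add_le_add hay.le hbc.le
      _ = ((y + c : ℝ) : EReal) := (EReal.coe_add _ _).symm
      _ ≤ (((s₀ - ε) + y : ℝ) : EReal) := EReal.coe_le_coe_iff.2 (by linarith)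
      _ = ((s₀ - ε : ℝ) : EReal) + (y : EReal) := EReal.coe_add _ _
      _ ≤ ((s₀ - ε : ℝ) : EReal) + ⨅ t ∈ Set.Icc (s₀ - ε) (s₀ + ε), (I t : EReal) :=
          add_le_add le_rfl hinf
      _ ≤ (Ihat s₀ : EReal) := hkey
  -- Direction 2 : Ihat s₀ ≤ I s₀ + s₀
  have dir2 : (Ihat s₀ : EReal) ≤ (I s₀ : EReal) + (s₀ : EReal) := by
    by_contra hcon
    rw [not_le] at hcon
    rcases eq_or_ne (I s₀) ⊤ with htop | hfin
    · rw [htop] at hcon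
      simp only [EReal.coe_ennreal_top, EReal.top_add_coe] at hcon
      exact (not_top_lt hcon)
    · obtain ⟨v, hv⟩ : ∃ v : ℝ≥0, I s₀ = (v : ℝ≥0∞) :=
        ⟨(I s₀).toNNReal, (ENNReal.coe_toNNReal hfin).symm⟩
      rw [hv] at hcon
      have hvco : ((v : ℝ≥0∞) : EReal) = ((v : ℝ) : EReal) := rfl
      obtain ⟨w, hw1, hw2⟩ := EReal.exists_between_coe_real hcon
      have hw1' : (v : ℝ) + s₀ < w := by
        rw [hvco, ← EReal.coe_add] at hw1
        exact_mod_cast hw1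
      obtain ⟨δ, hδpos, hδ⟩ := myaux_lsc hIhatlsc hw2
      set ε := min (min δ ε₀) ((w - (v : ℝ) - s₀) / 2) with hε
      have hεpos : 0 < ε := lt_min (lt_min hδpos hε₀pos) (by linarith)
      have hεδ : ε ≤ δ := le_trans (min_le_left _ _) (min_le_left _ _)
      have hεε₀ : ε ≤ ε₀ := le_trans (min_le_left _ _) (min_le_right _ _)
      have hεw : ε ≤ (w - (v : ℝ) - s₀) / 2 := min_le_right _ _
      have hkey := (key ε hεpos hεε₀).2
      have hinf : (w : EReal) ≤ ⨅ t ∈ Set.Icc (s₀ - ε) (s₀ + ε), (Ihat t : EReal) := by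
        refine le_iInf₂ fun t ht => hδ t ?_
        rw [Real.dist_eq, abs_sub_le_iff]
        exact ⟨by linarith [ht.2], by linarith [ht.1]⟩
      have hfinal : (w : EReal) ≤ ((s₀ + ε + (v : ℝ) : ℝ) : EReal) := by
        calc (w : EReal) ≤ ⨅ t ∈ Set.Icc (s₀ - ε) (s₀ + ε), (Ihat t : EReal) := hinf
          _ ≤ ((s₀ + ε : ℝ) : EReal) + ((v : ℝ≥0∞) : EReal) := by rw [← hv]; exact hkey
          _ = ((s₀ + ε + (v : ℝ) : ℝ) : EReal) := by rw [hvco, ← EReal.coe_add]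
      have : w ≤ s₀ + ε + (v : ℝ) := by exact_mod_cast hfinal
      linarith
  exact le_antisymm dir2 dir1
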